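/- The k-chromatic polynomial of a graph G satisfies π^G_k(q) = (1/k!) · π^{G(k)}_1(q), where G(k) is the join of G with respect to k: replace vertex j by a clique of size k_j, joining all vertices of the r-th and s-th cliques whenever {r,s} is an edge of G, and k! = Π_i k_i!. -/

import Mathlib

open scoped Classical
noncomputable section

/-- The number of proper vertex `k`-multicolorings of `G` with colors from `{1, …, q}`:
each vertex `i` receives a set of exactly `k i` colors, and adjacent vertices receive
disjoint color sets.  As a function of `q` this is the `k`-chromatic polynomial
`π^G_k(q)`. -/
def properMulticolorings {I : Type*} (G : SimpleGraph I) (k : I →₀ ℕ) (q : ℕ) : ℕ :=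
  Nat.card {τ : I → Finset (Fin q) //
    (∀ i, (τ i).card = k i) ∧ ∀ i j, G.Adj i j → Disjoint (τ i) (τ j)}

/-- The join `G(k)` of `G` with respect to `k`: each vertex `j` is replaced by a clique of
size `k j`, and all vertices of the `r`-th and `s`-th cliques are joined whenever
`{r, s}` is an edge of `G`. -/
def joinGraph {I : Type*} (G : SimpleGraph I) (k : I →₀ ℕ) :
    SimpleGraph (Σ i : k.support, Fin (k i.1)) where
  Adj x y := (x.1.1 = y.1.1 ∧ x ≠ y) ∨ G.Adj x.1.1 y.1.1
  symm := by
    constructor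
    rintro x y (⟨h1, h2⟩ | h)
    · exact Or.inl ⟨h1.symm, h2.symm⟩
    · exact Or.inr h.symm
  loopless := by
    constructor
    rintro x (⟨_, h⟩ | h)
    · exact h rfl
    · exact G.loopless.irrefl _ h

/-- The number of proper vertex colorings of `H` with `q` colors (the ordinary chromatic
polynomial `π^H_1(q)`). -/
def properColorings {V : Type*} (H : SimpleGraph V) (q : ℕ) : ℕ :=
  Nat.card {c : V → Fin q // ∀ v w, H.Adj v w → c v ≠ c w}

section Aux
variable {I : Type*} (G : SimpleGraph I) (k : I →₀ ℕ) (q : ℕ)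

abbrev MC := {τ : I → Finset (Fin q) //
    (∀ i, (τ i).card = k i) ∧ ∀ i j, G.Adj i j → Disjoint (τ i) (τ j)}

abbrev PC := {c : (Σ i : k.support, Fin (k i.1)) → Fin q //
    ∀ v w, (joinGraph G k).Adj v w → c v ≠ c w}

lemma mc_empty (τ : MC G k q) {i : I} (hi : i ∉ k.support) : τ.1 i = ∅ :=
  Finset.card_eq_zero.mp (by rw [τ.2.1 i, Finsupp.notMem_support_iff.mp hi])

instance : Finite (MC G k q) := by
  apply Finite.of_injective
    (fun τ : MC G k q => (fun i : k.support => τ.1 i.1 : k.support → Finset (Fin q)))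
  intro τ σ h
  apply Subtype.ext
  funext i
  by_cases hi : i ∈ k.support
  · exact congrFun h ⟨i, hi⟩
  · rw [mc_empty G k q τ hi, mc_empty G k q σ hi]

def backMap : (Σ τ : MC G k q, ∀ i : k.support, Fin (k i.1) ≃ {x : Fin q // x ∈ τ.1 i.1}) →
    PC G k q := fun p =>
  ⟨fun x => (p.2 x.1 x.2).1, by
    rintro ⟨⟨i, hi⟩, a⟩ ⟨⟨j, hj⟩, b⟩ hadj hval
    have hval' : (p.2 ⟨i, hi⟩ a : Fin q) = (p.2 ⟨j, hj⟩ b : Fin q) := hval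
    rcases hadj with ⟨h1, h2⟩ | h
    · dsimp at h1; subst h1
      exact h2 (by
        have hab : a = b := (p.2 ⟨i, hi⟩).injective (Subtype.ext hval')
        simp [hab])
    · have hm1 : (p.2 ⟨i, hi⟩ a : Fin q) ∈ p.1.1 i := (p.2 ⟨i, hi⟩ a).2
      have hm2 : (p.2 ⟨j, hj⟩ b : Fin q) ∈ p.1.1 j := (p.2 ⟨j, hj⟩ b).2
      rw [hval'] at hm1
      exact Finset.disjoint_left.mp (p.1.2.2 _ _ h) hm1 hm2⟩

theorem backMap_bijective : Function.Bijective (backMap G k q) := by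
  constructor
  · rintro ⟨τ, e⟩ ⟨σ, f⟩ h
    have hc : ∀ (x : Σ i : k.support, Fin (k i.1)),
        (e x.1 x.2 : Fin q) = (f x.1 x.2 : Fin q) :=
      fun x => congrFun (congrArg Subtype.val h) x
    have hτσ : τ = σ := by
      apply Subtype.ext
      funext i
      by_cases hi : i ∈ k.support
      · ext x
        constructor
        · intro hx
          obtain ⟨a, ha⟩ := (e ⟨i, hi⟩).surjective ⟨x, hx⟩
          have hx' := hc ⟨⟨i, hi⟩, a⟩
          rw [ha] at hx'
          have hxx : x = (f ⟨i, hi⟩ a : Fin q) := hx'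
          rw [hxx]; exact (f ⟨i, hi⟩ a).2
        · intro hx
          obtain ⟨a, ha⟩ := (f ⟨i, hi⟩).surjective ⟨x, hx⟩
          have hx' := hc ⟨⟨i, hi⟩, a⟩
          rw [ha] at hx'
          have hxx : (e ⟨i, hi⟩ a : Fin q) = x := hx'
          rw [← hxx]; exact (e ⟨i, hi⟩ a).2
      · rw [mc_empty G k q τ hi, mc_empty G k q σ hi]
    subst hτσ
    have hef : e = f := by
      funext i
      apply Equiv.ext
      intro a
      exact Subtype.ext (hc ⟨i, a⟩)
    rw [hef]
  · rintro ⟨c, hc⟩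
    have hinj : ∀ (i : k.support), Function.Injective (fun a : Fin (k i.1) => c ⟨i, a⟩) := by
      intro i a b hab
      by_contra hne
      exact hc ⟨i, a⟩ ⟨i, b⟩ (Or.inl ⟨rfl, by simp [Sigma.ext_iff, hne]⟩) hab
    set τ : I → Finset (Fin q) := fun i =>
      if h : i ∈ k.support then Finset.image (fun a : Fin (k i) => c ⟨⟨i, h⟩, a⟩) Finset.univ
      else ∅ with hτdef
    have hτpos : ∀ {i : I} (hi : i ∈ k.support),
        τ i = Finset.image (fun a : Fin (k i) => c ⟨⟨i, hi⟩, a⟩) Finset.univ := by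
      intro i hi; rw [hτdef]; exact dif_pos hi
    have hτneg : ∀ {i : I}, i ∉ k.support → τ i = ∅ := by
      intro i hi; rw [hτdef]; exact dif_neg hi
    have hτcard : ∀ i, (τ i).card = k i := by
      intro i
      by_cases hi : i ∈ k.support
      · rw [hτpos hi, Finset.card_image_of_injective _ (hinj ⟨i, hi⟩)]
        simp
      · rw [hτneg hi, Finset.card_empty, Finsupp.notMem_support_iff.mp hi]
    have hτdisj : ∀ i j, G.Adj i j → Disjoint (τ i) (τ j) := by
      intro i j hij
      by_cases hi : i ∈ k.support
      · by_cases hj : j ∈ k.support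
        · rw [hτpos hi, hτpos hj, Finset.disjoint_left]
          rintro x hx hx'
          simp only [Finset.mem_image, Finset.mem_univ, true_and] at hx hx'
          obtain ⟨a, ha⟩ := hx
          obtain ⟨b, hb⟩ := hx'
          exact hc ⟨⟨i, hi⟩, a⟩ ⟨⟨j, hj⟩, b⟩ (Or.inr hij) (ha.trans hb.symm)
        · rw [hτneg hj]; exact Finset.disjoint_empty_right _
      · rw [hτneg hi]; exact Finset.disjoint_empty_left _
    have hmem : ∀ (i : k.support) (a : Fin (k i.1)), c ⟨i, a⟩ ∈ τ i.1 := by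
      rintro ⟨i, hi⟩ a
      rw [hτpos hi]
      exact Finset.mem_image_of_mem _ (Finset.mem_univ a)
    have hbij : ∀ i : k.support,
        Function.Bijective
          (fun a : Fin (k i.1) => (⟨c ⟨i, a⟩, hmem i a⟩ : {x // x ∈ τ i.1})) := by
      intro i
      rw [Fintype.bijective_iff_injective_and_card]
      refine ⟨fun a b hab => hinj i (congrArg Subtype.val hab), ?_⟩
      rw [Fintype.card_coe, hτcard]
      simp
    refine ⟨⟨⟨τ, hτcard, hτdisj⟩, fun i => Equiv.ofBijective _ (hbij i)⟩, ?_⟩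
    apply Subtype.ext
    funext x
    rfl

end Aux

/-- `π^G_k(q) = (1/k!) · π^{G(k)}_1(q)`, where `G(k)` is the join of `G` with respect to
`k` and `k! = ∏ᵢ kᵢ!`; stated without division as `k! · π^G_k(q) = π^{G(k)}_1(q)`. -/
theorem multichromatic_eq_chromatic_of_join {I : Type*} (G : SimpleGraph I)
    (k : I →₀ ℕ) (q : ℕ) :
    (k.prod fun _ n => n.factorial) * properMulticolorings G k q =
      properColorings (joinGraph G k) q := by
  have hcard : properColorings (joinGraph G k) q =
      Nat.card (Σ τ : MC G k q, ∀ i : k.support, Fin (k i.1) ≃ {x : Fin q // x ∈ τ.1 i.1}) :=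
    (Nat.card_eq_of_bijective _ (backMap_bijective G k q)).symm
  have hfiber : ∀ τ : MC G k q,
      Nat.card (∀ i : k.support, Fin (k i.1) ≃ {x : Fin q // x ∈ τ.1 i.1}) =
        k.prod fun _ n => n.factorial := by
    intro τ
    rw [Nat.card_eq_fintype_card, Fintype.card_pi]
    rw [Finsupp.prod, ← Finset.prod_attach k.support fun a => (k a).factorial,
      ← Finset.univ_eq_attach]
    apply Finset.prod_congr rfl
    intro i _
    have hce : Fintype.card {x : Fin q // x ∈ τ.1 i.1} = Fintype.card (Fin (k i.1)) := by
      rw [Fintype.card_coe, τ.2.1 i.1, Fintype.card_fin]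
    rw [Fintype.card_equiv (Fintype.equivOfCardEq hce).symm, Fintype.card_fin]
  rw [hcard]
  have := Fintype.ofFinite (MC G k q)
  rw [Nat.card_eq_fintype_card, Fintype.card_sigma]
  have hsum : ∀ τ : MC G k q,
      Fintype.card (∀ i : k.support, Fin (k i.1) ≃ {x : Fin q // x ∈ τ.1 i.1}) =
        k.prod fun _ n => n.factorial := fun τ => by
    rw [← Nat.card_eq_fintype_card]; exact hfiber τ
  rw [Finset.sum_congr rfl (fun τ _ => hsum τ), Finset.sum_const, Finset.card_univ,
    ← Nat.card_eq_fintype_card]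
  rw [properMulticolorings, smul_eq_mul, mul_comm]
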